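/- Let J = (J_1,…,J_g) ∈ M_d(ℂ)^g be linearly independent with the span of J_1,…,J_g closed under multiplication, and let Ξ ∈ M_g(ℂ)^g be the unique tuple with J_k J_j = Σ_{s=1}^g (Ξ_j)_{k,s} J_s. Then for every n and every X ∈ M_n(ℂ)^g such that L_J(X) is positive semidefinite but not invertible (i.e., X lies in the boundary of D_J(n)), the matrix I + Λ_Ξ(X) is invertible and ‖Λ_J(q(X))‖ = 1, where q(X) = X(I+Λ_Ξ(X))^{-1}; that is, q maps the boundary of D_J into the boundary of the spectraball B_J. -/

import Mathlib

open scoped Kronecker Matrix Matrix.Norms.L2Operator ComplexOrder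

noncomputable section

/-- `Λ_A(X) = Σⱼ Aⱼ ⊗ Xⱼ` (Kronecker product), a `dn × dn` matrix. -/
def lamK {g d n : ℕ} (A : Fin g → Matrix (Fin d) (Fin d) ℂ)
    (X : Fin g → Matrix (Fin n) (Fin n) ℂ) :
    Matrix (Fin d × Fin n) (Fin d × Fin n) ℂ :=
  ∑ j, (A j) ⊗ₖ (X j)

/-- `L_A(X) = I + Λ_A(X) + Λ_A(X)^*`. -/
def Lpen {g d n : ℕ} (A : Fin g → Matrix (Fin d) (Fin d) ℂ)
    (X : Fin g → Matrix (Fin n) (Fin n) ℂ) :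
    Matrix (Fin d × Fin n) (Fin d × Fin n) ℂ :=
  1 + lamK A X + (lamK A X)ᴴ

/-- The `n × n` block of a `gn × gn` matrix in position `(j, i)`. -/
def blk {g n : ℕ} (M : Matrix (Fin g × Fin n) (Fin g × Fin n) ℂ) (j i : Fin g) :
    Matrix (Fin n) (Fin n) ℂ :=
  fun a b => M (j, a) (i, b)

/-- The convexotonic map `p(X) = X (I - Λ_Ξ(X))⁻¹`, given blockwise by
`p(X)ᵢ = Σⱼ Xⱼ [(I - Λ_Ξ(X))⁻¹]_{j,i}`. -/
def pmap {g n : ℕ} (Ξ : Fin g → Matrix (Fin g) (Fin g) ℂ)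
    (X : Fin g → Matrix (Fin n) (Fin n) ℂ) : Fin g → Matrix (Fin n) (Fin n) ℂ :=
  fun i => ∑ j, X j * blk ((1 - lamK Ξ X)⁻¹) j i

/-- The convexotonic map `q(X) = X (I + Λ_Ξ(X))⁻¹`, given blockwise by
`q(X)ᵢ = Σⱼ Xⱼ [(I + Λ_Ξ(X))⁻¹]_{j,i}`. -/
def qmap {g n : ℕ} (Ξ : Fin g → Matrix (Fin g) (Fin g) ℂ)
    (X : Fin g → Matrix (Fin n) (Fin n) ℂ) : Fin g → Matrix (Fin n) (Fin n) ℂ :=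
  fun i => ∑ j, X j * blk ((1 + lamK Ξ X)⁻¹) j i

/-- A tuple `Ξ` of `g × g` matrices is convexotonic if
`Ξ_k Ξ_j = Σ_s (Ξ_j)_{k,s} Ξ_s` for all `j, k`. -/
def Convexotonic {g : ℕ} (Ξ : Fin g → Matrix (Fin g) (Fin g) ℂ) : Prop :=
  ∀ j k, Ξ k * Ξ j = ∑ s, (Ξ j) k s • Ξ s

/-- `Λ_A(α) = Σⱼ αⱼ Aⱼ` for a scalar point `α ∈ ℂ^g`. -/
def lamScalar {g d : ℕ} (A : Fin g → Matrix (Fin d) (Fin d) ℂ) (α : Fin g → ℂ) :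
    Matrix (Fin d) (Fin d) ℂ :=
  ∑ j, α j • A j

/-- A hyperbasis of `ℂ^d`: `d+1` vectors, each `d` of which form a basis. -/
def Hyperbasis {d : ℕ} (u : Fin (d + 1) → (Fin d → ℂ)) : Prop :=
  ∀ i : Fin (d + 1),
    LinearIndependent ℂ (fun j : {j : Fin (d + 1) // j ≠ i} => u j) ∧
    Submodule.span ℂ (Set.range fun j : {j : Fin (d + 1) // j ≠ i} => u j) = ⊤

/-- The tuple `A ∈ M_d(ℂ)^g` is sv-generic. -/
def SvGeneric {g d : ℕ} (A : Fin g → Matrix (Fin d) (Fin d) ℂ) : Prop :=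
  (∃ (α : Fin (d + 1) → (Fin g → ℂ)) (u : Fin (d + 1) → (Fin d → ℂ)),
    (∀ j, (1 - (lamScalar A (α j))ᴴ * lamScalar A (α j)).PosSemidef ∧
      u j ≠ 0 ∧
      LinearMap.ker (Matrix.mulVecLin (1 - (lamScalar A (α j))ᴴ * lamScalar A (α j)))
        = Submodule.span ℂ {u j}) ∧
    Hyperbasis u) ∧
  (∃ (β : Fin d → (Fin g → ℂ)) (v : Fin d → (Fin d → ℂ)),
    (∀ k, (1 - lamScalar A (β k) * (lamScalar A (β k))ᴴ).PosSemidef ∧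
      v k ≠ 0 ∧
      LinearMap.ker (Matrix.mulVecLin (1 - lamScalar A (β k) * (lamScalar A (β k))ᴴ))
        = Submodule.span ℂ {v k}) ∧
    LinearIndependent ℂ v ∧ Submodule.span ℂ (Set.range v) = ⊤)

/-- Evaluation of a `k × l` matrix of noncommutative polynomials at a tuple of
`n × n` matrices, yielding a `kn × ln` matrix. -/
def polyEval {k l g n : ℕ} (Q : Matrix (Fin k) (Fin l) (FreeAlgebra ℂ (Fin g)))
    (X : Fin g → Matrix (Fin n) (Fin n) ℂ) :
    Matrix (Fin k × Fin n) (Fin l × Fin n) ℂ :=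
  fun a b => (FreeAlgebra.lift ℂ X) (Q a.1 b.1) a.2 b.2

/-! ### Auxiliary lemmas -/

lemma sum_kron {d d' n n' : ℕ} {ι : Type*} (s : Finset ι) (f : ι → Matrix (Fin d) (Fin d') ℂ)
    (B : Matrix (Fin n) (Fin n') ℂ) :
    (∑ i ∈ s, f i) ⊗ₖ B = ∑ i ∈ s, (f i) ⊗ₖ B := by
  ext ⟨a, c⟩ ⟨b, e⟩
  simp [Matrix.kroneckerMap_apply, Matrix.sum_apply, Finset.sum_mul]

lemma kron_sum {d d' n n' : ℕ} {ι : Type*} (s : Finset ι) (A : Matrix (Fin d) (Fin d') ℂ)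
    (f : ι → Matrix (Fin n) (Fin n') ℂ) :
    A ⊗ₖ (∑ i ∈ s, f i) = ∑ i ∈ s, A ⊗ₖ (f i) := by
  ext ⟨a, c⟩ ⟨b, e⟩
  simp [Matrix.kroneckerMap_apply, Matrix.sum_apply, Finset.mul_sum]

lemma lamK_add {g d n : ℕ} (A : Fin g → Matrix (Fin d) (Fin d) ℂ)
    (X Y : Fin g → Matrix (Fin n) (Fin n) ℂ) :
    lamK A (fun i => X i + Y i) = lamK A X + lamK A Y := by
  simp [lamK, Matrix.kronecker_add, Finset.sum_add_distrib]

lemma lamK_eq_zero {g d n : ℕ} {J : Fin g → Matrix (Fin d) (Fin d) ℂ}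
    (hli : LinearIndependent ℂ J) {Z : Fin g → Matrix (Fin n) (Fin n) ℂ}
    (h : lamK J Z = 0) : Z = 0 := by
  funext j
  ext c e
  have key : ∀ a b, (∑ i, Z i c e • J i) a b = 0 := by
    intro a b
    have := congrFun (congrFun h (a, c)) (b, e)
    simpa [lamK, Matrix.sum_apply, Matrix.kroneckerMap_apply, mul_comm] using this
  have hz : ∑ i, Z i c e • J i = 0 := by ext a b; simpa using key a b
  have := Fintype.linearIndependent_iff.mp hli (fun i => Z i c e) hz
  simpa using this j

lemma blk_one {g n : ℕ} (j i : Fin g) :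
    blk (1 : Matrix (Fin g × Fin n) (Fin g × Fin n) ℂ) j i = if j = i then 1 else 0 := by
  ext a b
  by_cases h : j = i <;> simp [blk, Matrix.one_apply, Prod.ext_iff, h]

lemma blk_mul {g n : ℕ} (M N : Matrix (Fin g × Fin n) (Fin g × Fin n) ℂ) (j i : Fin g) :
    blk (M * N) j i = ∑ k, blk M j k * blk N k i := by
  ext a b
  simp [blk, Matrix.mul_apply, Matrix.sum_apply, Fintype.sum_prod_type]

lemma blk_add {g n : ℕ} (M N : Matrix (Fin g × Fin n) (Fin g × Fin n) ℂ) (j i : Fin g) :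
    blk (M + N) j i = blk M j i + blk N j i := rfl

lemma blk_lamK {g n : ℕ} (Ξ : Fin g → Matrix (Fin g) (Fin g) ℂ)
    (Y : Fin g → Matrix (Fin n) (Fin n) ℂ) (k i : Fin g) :
    blk (lamK Ξ Y) k i = ∑ j, (Ξ j) k i • Y j := by
  ext a b
  simp [blk, lamK, Matrix.sum_apply, Matrix.kroneckerMap_apply]

/-- Key multiplicativity of `lamK` coming from the multiplication rule for `J`. -/
lemma lamK_mul {g d n : ℕ} (J : Fin g → Matrix (Fin d) (Fin d) ℂ)
    (Ξ : Fin g → Matrix (Fin g) (Fin g) ℂ)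
    (hΞ : ∀ k j, J k * J j = ∑ s, (Ξ j) k s • J s)
    (X Y : Fin g → Matrix (Fin n) (Fin n) ℂ) :
    lamK J X * lamK J Y = lamK J (fun i => ∑ k, X k * blk (lamK Ξ Y) k i) := by
  have expand : ∀ i, (fun i => ∑ k, X k * blk (lamK Ξ Y) k i) i
      = ∑ k, ∑ j, (Ξ j) k i • (X k * Y j) := by
    intro i
    refine Finset.sum_congr rfl fun k _ => ?_
    rw [blk_lamK, Finset.mul_sum]
    exact Finset.sum_congr rfl fun j _ => by rw [Matrix.mul_smul]
  calc lamK J X * lamK J Y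
      = ∑ k, ∑ j, (J k * J j) ⊗ₖ (X k * Y j) := by
        unfold lamK
        rw [Finset.sum_mul_sum]
        exact Finset.sum_congr rfl fun k _ => Finset.sum_congr rfl fun j _ =>
          (Matrix.mul_kronecker_mul _ _ _ _).symm
    _ = ∑ k, ∑ j, ∑ i, (Ξ j) k i • ((J i) ⊗ₖ (X k * Y j)) := by
        refine Finset.sum_congr rfl fun k _ => Finset.sum_congr rfl fun j _ => ?_
        rw [hΞ k j, sum_kron]
        exact Finset.sum_congr rfl fun i _ => Matrix.smul_kronecker _ _ _
    _ = ∑ k, ∑ i, ∑ j, (Ξ j) k i • ((J i) ⊗ₖ (X k * Y j)) :=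
        Finset.sum_congr rfl fun k _ => Finset.sum_comm
    _ = ∑ i, ∑ k, ∑ j, (Ξ j) k i • ((J i) ⊗ₖ (X k * Y j)) := Finset.sum_comm
    _ = lamK J (fun i => ∑ k, X k * blk (lamK Ξ Y) k i) := by
        rw [funext expand]
        unfold lamK
        refine (Finset.sum_congr rfl fun i _ => ?_).symm
        rw [kron_sum]
        refine Finset.sum_congr rfl fun k _ => ?_
        rw [kron_sum]
        exact Finset.sum_congr rfl fun j _ => Matrix.kronecker_smul _ _ _

/-- PSD of `1 + M + Mᴴ` implies `1 + M` invertible. -/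
lemma unit_of_psd {m : Type*} [Fintype m] [DecidableEq m] (M : Matrix m m ℂ)
    (h : (1 + M + Mᴴ).PosSemidef) : IsUnit (1 + M) := by
  rw [Matrix.isUnit_iff_isUnit_det, isUnit_iff_ne_zero]
  intro hdet
  obtain ⟨v, hv, hvz⟩ := Matrix.exists_mulVec_eq_zero_iff.mpr hdet
  have hMv : M *ᵥ v = -v := by
    have h1 := hvz
    rw [Matrix.add_mulVec, Matrix.one_mulVec] at h1
    linear_combination (norm := module) h1
  have h2 := h.dotProduct_mulVec_nonneg v
  have hexp : (1 + M + Mᴴ) *ᵥ v = Mᴴ *ᵥ v := by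
    rw [Matrix.add_mulVec, Matrix.add_mulVec, Matrix.one_mulVec, hMv]
    module
  rw [hexp] at h2
  have hdp : star v ⬝ᵥ (Mᴴ *ᵥ v) = -(star v ⬝ᵥ v) := by
    have h3 : star v ⬝ᵥ (Mᴴ *ᵥ v) = star (M *ᵥ v) ⬝ᵥ v := by
      rw [Matrix.star_mulVec, Matrix.dotProduct_mulVec]
    rw [h3, hMv, star_neg, neg_dotProduct]
  rw [hdp] at h2
  have hpos : (0:ℂ) ≤ star v ⬝ᵥ v := dotProduct_star_self_nonneg v
  have h4 : star v ⬝ᵥ v = 0 := le_antisymm (neg_nonneg.mp h2) hpos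
  exact hv (dotProduct_star_self_eq_zero.mp h4)

lemma dp_star_self_eq_sq {m : Type*} [Fintype m] (w : m → ℂ) :
    star w ⬝ᵥ w = ((‖(WithLp.equiv 2 (m → ℂ)).symm w‖ : ℝ) : ℂ) ^ 2 := by
  have := @inner_self_eq_norm_sq_to_K ℂ (EuclideanSpace ℂ m) _ _ _
    ((WithLp.equiv 2 (m → ℂ)).symm w)
  rw [EuclideanSpace.inner_eq_star_dotProduct, dotProduct_comm] at this
  simpa using this

/-- If `1 - NᴴN` is PSD and singular, then `‖N‖ = 1` in the L2 operator norm. -/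
lemma l2norm_eq_one {m : Type*} [Fintype m] [DecidableEq m] (N : Matrix m m ℂ)
    (hK : (1 - Nᴴ * N).PosSemidef) (v : m → ℂ) (hv : v ≠ 0)
    (hvz : (1 - Nᴴ * N) *ᵥ v = 0) : ‖N‖ = 1 := by
  have key : ∀ w : m → ℂ, star w ⬝ᵥ ((1 - Nᴴ * N) *ᵥ w)
      = star w ⬝ᵥ w - star (N *ᵥ w) ⬝ᵥ (N *ᵥ w) := by
    intro w
    rw [Matrix.sub_mulVec, Matrix.one_mulVec, dotProduct_sub]
    congr 1
    rw [← Matrix.mulVec_mulVec, Matrix.star_mulVec, Matrix.dotProduct_mulVec]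
  have hle : ∀ w : m → ℂ, ‖(WithLp.equiv 2 (m → ℂ)).symm (N *ᵥ w)‖
      ≤ ‖(WithLp.equiv 2 (m → ℂ)).symm w‖ := by
    intro w
    have h0 := hK.dotProduct_mulVec_nonneg w
    rw [key w, dp_star_self_eq_sq, dp_star_self_eq_sq] at h0
    have hsq : (‖(WithLp.equiv 2 (m → ℂ)).symm (N *ᵥ w)‖ : ℝ) ^ 2
        ≤ (‖(WithLp.equiv 2 (m → ℂ)).symm w‖ : ℝ) ^ 2 := by
      have h1 : (0:ℂ) ≤ (((‖(WithLp.equiv 2 (m → ℂ)).symm w‖ : ℝ) ^ 2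
          - (‖(WithLp.equiv 2 (m → ℂ)).symm (N *ᵥ w)‖ : ℝ) ^ 2 : ℝ) : ℂ) := by
        push_cast
        exact h0
      rw [Complex.zero_le_real] at h1
      linarith
    exact (pow_le_pow_iff_left₀ (norm_nonneg _) (norm_nonneg _) two_ne_zero).mp hsq
  have hub : ‖N‖ ≤ 1 := by
    rw [Matrix.l2_opNorm_def]
    refine ContinuousLinearMap.opNorm_le_bound _ zero_le_one fun x => ?_
    rw [one_mul]
    show ‖Matrix.toEuclideanLin N x‖ ≤ ‖x‖
    rw [Matrix.toEuclideanLin_apply]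
    have := hle ((WithLp.equiv 2 (m → ℂ)) x)
    simpa using this
  have hNv : star (N *ᵥ v) ⬝ᵥ (N *ᵥ v) = star v ⬝ᵥ v := by
    have h5 := key v
    rw [hvz, dotProduct_zero] at h5
    exact (sub_eq_zero.mp h5.symm).symm
  have hnorm_eq : ‖(WithLp.equiv 2 (m → ℂ)).symm (N *ᵥ v)‖
      = ‖(WithLp.equiv 2 (m → ℂ)).symm v‖ := by
    have h1 := dp_star_self_eq_sq (N *ᵥ v)
    have h2 := dp_star_self_eq_sq v
    rw [hNv, h2] at h1
    have h6 : (‖(WithLp.equiv 2 (m → ℂ)).symm v‖ : ℝ) ^ 2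
        = (‖(WithLp.equiv 2 (m → ℂ)).symm (N *ᵥ v)‖ : ℝ) ^ 2 := by
      exact_mod_cast h1
    nlinarith [norm_nonneg ((WithLp.equiv 2 (m → ℂ)).symm (N *ᵥ v)),
      norm_nonneg ((WithLp.equiv 2 (m → ℂ)).symm v)]
  have hvpos : 0 < ‖(WithLp.equiv 2 (m → ℂ)).symm v‖ := by
    rw [norm_pos_iff]
    intro h
    apply hv
    have := congrArg (WithLp.equiv 2 (m → ℂ)) h
    simpa using this
  have hlb : 1 ≤ ‖N‖ := by
    have hmv : ‖(WithLp.equiv 2 (m → ℂ)).symm (N *ᵥ v)‖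
        ≤ ‖N‖ * ‖(WithLp.equiv 2 (m → ℂ)).symm v‖ :=
      Matrix.l2_opNorm_mulVec N ((WithLp.equiv 2 (m → ℂ)).symm v)
    have h3 : ‖(WithLp.equiv 2 (m → ℂ)).symm v‖
        ≤ ‖N‖ * ‖(WithLp.equiv 2 (m → ℂ)).symm v‖ := hnorm_eq ▸ hmv
    exact (le_mul_iff_one_le_left hvpos).mp h3
  exact le_antisymm hub hlb

/-- if `J` is linearly independent with span closed under
multiplication and `J_k J_j = Σ_s (Ξ_j)_{k,s} J_s`, then for `X` in the boundary
of `D_J` (i.e. `L_J(X)` positive semidefinite but singular), the matrix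
`I + Λ_Ξ(X)` is invertible and `‖Λ_J(q(X))‖ = 1`. -/
theorem qmap_boundary_to_boundary {g d : ℕ}
    (J : Fin g → Matrix (Fin d) (Fin d) ℂ)
    (Ξ : Fin g → Matrix (Fin g) (Fin g) ℂ)
    (hli : LinearIndependent ℂ J)
    (hmul : ∀ k j, J k * J j ∈ Submodule.span ℂ (Set.range J))
    (hΞ : ∀ k j, J k * J j = ∑ s, (Ξ j) k s • J s) :
    ∀ (n : ℕ) (X : Fin g → Matrix (Fin n) (Fin n) ℂ),
      (Lpen J X).PosSemidef → ¬ IsUnit (Lpen J X) →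
        IsUnit (1 + lamK Ξ X) ∧ ‖lamK J (qmap Ξ X)‖ = 1 := by
  intro n X hpsd hsing
  set Λ : Matrix (Fin d × Fin n) (Fin d × Fin n) ℂ := lamK J X with hΛ
  set M : Matrix (Fin d × Fin n) (Fin d × Fin n) ℂ := 1 + Λ with hM
  have hMunit : IsUnit M := unit_of_psd (lamK J X) hpsd
  have hMdet : IsUnit M.det := (Matrix.isUnit_iff_isUnit_det M).mp hMunit
  have h1 : M * M⁻¹ = 1 := Matrix.mul_nonsing_inv _ hMdet
  -- Step 1: `1 + lamK Ξ X` is invertible.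
  have hHatUnit : IsUnit (1 + lamK Ξ X) := by
    by_contra hn
    rw [Matrix.isUnit_iff_isUnit_det, isUnit_iff_ne_zero, not_not] at hn
    obtain ⟨w, hw, hwz⟩ := Matrix.exists_vecMul_eq_zero_iff.mpr hn
    set N : Fin g → Matrix (Fin n) (Fin n) ℂ := fun s => Matrix.of (fun a b => w (s, b)) with hN
    have hz : (fun i => N i + ∑ k, N k * blk (lamK Ξ X) k i)
        = fun _ => (0 : Matrix (Fin n) (Fin n) ℂ) := by
      funext i
      ext a b
      have hv := congrFun hwz (i, b)
      simp only [Matrix.vecMul, dotProduct, Fintype.sum_prod_type, Pi.zero_apply,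
        Matrix.add_apply, mul_add, Finset.sum_add_distrib] at hv
      rw [show (∑ k, ∑ c, w (k, c) *
            (1 : Matrix (Fin g × Fin n) (Fin g × Fin n) ℂ) (k, c) (i, b)) = w (i, b) from by
          simp [Matrix.one_apply, Prod.ext_iff, ite_and, Finset.sum_ite_eq, Finset.sum_ite_eq']] at hv
      simp only [Matrix.add_apply, Matrix.sum_apply, Matrix.mul_apply, blk, hN,
        Matrix.of_apply, Matrix.zero_apply]
      linear_combination hv
    have hTM : lamK J N * M = 0 := by
      rw [hM, mul_add, mul_one, hΛ, lamK_mul J Ξ hΞ N X, ← lamK_add, hz]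
      simp [lamK]
    have hNz : lamK J N = 0 := by
      have h2 : lamK J N * M * M⁻¹ = 0 := by rw [hTM, zero_mul]
      rwa [mul_assoc, h1, mul_one] at h2
    have hN0 : N = 0 := lamK_eq_zero hli hNz
    apply hw
    funext p
    have := congrFun (congrFun (congrFun hN0 p.1) p.2) p.2
    simpa [hN] using this
  have hHatDet : IsUnit (1 + lamK Ξ X).det := (Matrix.isUnit_iff_isUnit_det _).mp hHatUnit
  have hBinv : (1 + lamK Ξ X)⁻¹ * (1 + lamK Ξ X) = 1 := Matrix.nonsing_inv_mul _ hHatDet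
  refine ⟨hHatUnit, ?_⟩
  -- Step 2: `E * M = Λ` where `E = lamK J (qmap Ξ X)`.
  have hq : ∀ i, qmap Ξ X i = ∑ j, X j * blk ((1 + lamK Ξ X)⁻¹) j i := fun _ => rfl
  have htuple : (fun i => qmap Ξ X i + ∑ k, qmap Ξ X k * blk (lamK Ξ X) k i) = X := by
    funext i
    calc qmap Ξ X i + ∑ k, qmap Ξ X k * blk (lamK Ξ X) k i
        = ∑ j, X j * blk ((1 + lamK Ξ X)⁻¹) j i
          + ∑ j, X j * blk ((1 + lamK Ξ X)⁻¹ * lamK Ξ X) j i := by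
          congr 1
          calc ∑ k, qmap Ξ X k * blk (lamK Ξ X) k i
              = ∑ k, ∑ j, X j * blk ((1 + lamK Ξ X)⁻¹) j k * blk (lamK Ξ X) k i := by
                refine Finset.sum_congr rfl fun k _ => ?_
                rw [hq k, Finset.sum_mul]
            _ = ∑ j, ∑ k, X j * (blk ((1 + lamK Ξ X)⁻¹) j k * blk (lamK Ξ X) k i) := by
                rw [Finset.sum_comm]
                exact Finset.sum_congr rfl fun j _ => Finset.sum_congr rfl fun k _ =>
                  mul_assoc _ _ _
            _ = ∑ j, X j * blk ((1 + lamK Ξ X)⁻¹ * lamK Ξ X) j i := by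
                refine Finset.sum_congr rfl fun j _ => ?_
                rw [← Finset.mul_sum, blk_mul]
      _ = ∑ j, X j * blk ((1 + lamK Ξ X)⁻¹ * (1 + lamK Ξ X)) j i := by
          rw [← Finset.sum_add_distrib]
          refine Finset.sum_congr rfl fun j _ => ?_
          rw [show (1 + lamK Ξ X)⁻¹ * (1 + lamK Ξ X)
              = (1 + lamK Ξ X)⁻¹ + (1 + lamK Ξ X)⁻¹ * lamK Ξ X from by noncomm_ring,
            blk_add, mul_add]
      _ = X i := by
          rw [hBinv]
          simp [blk_one]
  have hEM : lamK J (qmap Ξ X) * M = Λ := by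
    rw [hM, mul_add, mul_one, hΛ, lamK_mul J Ξ hΞ (qmap Ξ X) X, ← lamK_add, htuple]
  -- Step 3: `E = 1 - M⁻¹`.
  have hE : lamK J (qmap Ξ X) = 1 - M⁻¹ := by
    have h5 : lamK J (qmap Ξ X) = Λ * M⁻¹ := by
      rw [← hEM, mul_assoc, h1, mul_one]
    have hΛM : Λ = M - 1 := by rw [hM]; noncomm_ring
    rw [h5, hΛM, sub_mul, one_mul, h1]
  -- Step 4: `1 - EᴴE = M⁻¹ᴴ (Lpen J X) M⁻¹`.
  have h2 : M⁻¹ᴴ * Mᴴ = 1 := by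
    rw [← Matrix.conjTranspose_mul, h1, Matrix.conjTranspose_one]
  have hLM : Lpen J X = M + Mᴴ - 1 := by
    rw [Lpen, hM, Matrix.conjTranspose_add, Matrix.conjTranspose_one, ← hΛ]
    noncomm_ring
  have hexp : 1 - (lamK J (qmap Ξ X))ᴴ * lamK J (qmap Ξ X) = M⁻¹ᴴ * Lpen J X * M⁻¹ := by
    rw [hE, hLM]
    have h6 : M⁻¹ᴴ * (M + Mᴴ - 1) * M⁻¹
        = M⁻¹ᴴ * M * M⁻¹ + M⁻¹ᴴ * Mᴴ * M⁻¹ - M⁻¹ᴴ * 1 * M⁻¹ := by noncomm_ring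
    rw [h6, h2, one_mul, mul_assoc, h1, mul_one,
      Matrix.conjTranspose_sub, Matrix.conjTranspose_one]
    noncomm_ring
  -- Step 5: PSD.
  have hKpsd : (1 - (lamK J (qmap Ξ X))ᴴ * lamK J (qmap Ξ X)).PosSemidef := by
    rw [hexp]
    exact hpsd.conjTranspose_mul_mul_same M⁻¹
  -- Step 6: singular vector.
  have hLdet : (Lpen J X).det = 0 := by
    by_contra h
    exact hsing ((Matrix.isUnit_iff_isUnit_det _).mpr (isUnit_iff_ne_zero.mpr h))
  obtain ⟨u, hu, huz⟩ := Matrix.exists_mulVec_eq_zero_iff.mpr hLdet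
  have hMiM : M⁻¹ *ᵥ (M *ᵥ u) = u := by
    rw [Matrix.mulVec_mulVec, Matrix.nonsing_inv_mul _ hMdet, Matrix.one_mulVec]
  have hvne : M *ᵥ u ≠ 0 := by
    intro h
    apply hu
    rw [← hMiM, h, Matrix.mulVec_zero]
  have hKv : (1 - (lamK J (qmap Ξ X))ᴴ * lamK J (qmap Ξ X)) *ᵥ (M *ᵥ u) = 0 := by
    rw [hexp, ← Matrix.mulVec_mulVec, ← Matrix.mulVec_mulVec, hMiM, huz, Matrix.mulVec_zero]
  exact l2norm_eq_one _ hKpsd _ hvne hKv
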